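/- Let p be an odd prime and let x, y be coprime integers with x + y ≠ 0, and let H_p = (x^p + y^p)/(x + y). Then p^2 does not divide H_p. -/

import Mathlib

theorem p_sq_not_dvd_Hp (p : ℕ) (hp : p.Prime) (hodd : Odd p)
    (x y : ℤ) (hxy : IsCoprime x y) (hne : x + y ≠ 0) :
    ¬ ((p : ℤ) ^ 2 ∣ (x ^ p + y ^ p) / (x + y)) := by
  intro h2
  set s : ℤ := x + y with hs
  set H : ℤ := (x ^ p + y ^ p) / s with hH
  have hdvd : s ∣ x ^ p + y ^ p := Odd.add_dvd_pow_add_pow x y hodd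
  have heq : x ^ p + y ^ p = s * H := (Int.mul_ediv_cancel' hdvd).symm
  haveI : Fact p.Prime := ⟨hp⟩
  have hpI : Prime (p : ℤ) := Nat.prime_iff_prime_int.mp hp
  -- Fermat: p ∣ a^p - a
  have fermat : ∀ a : ℤ, (p : ℤ) ∣ a ^ p - a := by
    intro a
    have : ((a ^ p - a : ℤ) : ZMod p) = 0 := by
      push_cast
      rw [ZMod.pow_card]
      ring
    exact_mod_cast (ZMod.intCast_zmod_eq_zero_iff_dvd _ p).mp this
  -- p ∣ H
  have hpH : (p : ℤ) ∣ H := dvd_trans (dvd_pow_self _ two_ne_zero) h2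
  -- p ∣ s
  have hps : (p : ℤ) ∣ s := by
    have h1 : (p : ℤ) ∣ (x ^ p + y ^ p) - s := by
      have h := (fermat x).add (fermat y)
      have e : x ^ p - x + (y ^ p - y) = (x ^ p + y ^ p) - s := by rw [hs]; ring
      rwa [e] at h
    have h3 : (p : ℤ) ∣ x ^ p + y ^ p := heq ▸ Dvd.dvd.mul_left hpH s
    have := h3.sub h1
    simpa using this
  -- ¬ p ∣ x
  have hpx : ¬ (p : ℤ) ∣ x := by
    intro hx
    have hy : (p : ℤ) ∣ y := by
      have := hps.sub hx
      simpa [hs] using this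
    exact hpI.not_unit (hxy.isUnit_of_dvd' hx hy)
  -- x^p + y^p ≠ 0
  have hsum_ne : x ^ p + y ^ p ≠ 0 := by
    intro h0
    have hx : x ^ p = (-y) ^ p := by
      rw [Odd.neg_pow hodd]
      linarith
    have : x = -y := hodd.strictMono_pow.injective hx
    exact hne (by rw [hs, this]; ring)
  have hHne : H ≠ 0 := by
    intro h0
    rw [h0, mul_zero] at heq
    exact hsum_ne heq
  -- Lifting the exponent
  have lte := Int.emultiplicity_pow_add_pow hp hodd hps hpx hodd
  have hsfin : FiniteMultiplicity (p : ℤ) s :=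
    Int.finiteMultiplicity_iff.mpr ⟨by simpa using hp.ne_one, hne⟩
  have hmul : emultiplicity (p : ℤ) (x ^ p + y ^ p)
      = emultiplicity (p : ℤ) s + emultiplicity (p : ℤ) H := by
    rw [heq, emultiplicity_mul hpI]
  have hp_self : emultiplicity p p = (1 : ℕ∞) := by
    have hfin : FiniteMultiplicity p p :=
      Nat.finiteMultiplicity_iff.mpr ⟨hp.ne_one, hp.pos⟩
    exact hfin.emultiplicity_self
  have hH1 : emultiplicity (p : ℤ) H = 1 := by
    have := hmul.symm.trans lte
    rw [hp_self] at this
    exact WithTop.add_left_cancel (finiteMultiplicity_iff_emultiplicity_ne_top.mp hsfin) this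
  have h2' : (2 : ℕ∞) ≤ emultiplicity (p : ℤ) H := le_emultiplicity_of_pow_dvd h2
  rw [hH1] at h2'
  exact absurd h2' (by norm_num)
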